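/- Let F be a free group of finite rank r ≥ 1 and suppose F = A *_{⟨c⟩} B is an amalgamated free product over an infinite cyclic subgroup ⟨c⟩, with A and B finitely generated and c ≠ 1, A ≠ ⟨c⟩ ≠ B. Then rank(F) = rank(A) + rank(B) − 1. -/

import Mathlib

section RF
variable {α : Type} [DecidableEq α]

lemma no_adjacent {L : List (α × Bool)} (hL : FreeGroup.reduce L = L) {k : ℕ} {x : α} {b : Bool}
    (h1 : L[k]? = some (x, b)) (h2 : L[k+1]? = some (x, !b)) : False := by
  have hk1 : k + 1 < L.length := (List.getElem?_eq_some_iff.mp h2).1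
  have hk : k < L.length := by omega
  have e1 : L[k] = (x, b) := by
    have := List.getElem?_eq_getElem hk
    rw [h1] at this; exact (Option.some_injective _ this).symm
  have e2 : L[k+1] = (x, !b) := by
    have := List.getElem?_eq_getElem hk1
    rw [h2] at this; exact (Option.some_injective _ this).symm
  have hdecomp : L = L.take k ++ (x, b) :: (x, !b) :: L.drop (k+2) := by
    conv_lhs => rw [← List.take_append_drop k L]
    congr 1
    rw [List.drop_eq_getElem_cons hk, e1]
    congr 1
    rw [show L.drop (k+1) = L[k+1] :: L.drop (k+2) from (List.drop_eq_getElem_cons hk1), e2]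
  exact FreeGroup.reduce.not (hL.trans hdecomp)

lemma exists_perm_extend {β : Type*} [Fintype β] [DecidableEq β] (S : Set β) (f : β → β)
    (hinj : S.InjOn f) : ∃ π : Equiv.Perm β, ∀ a ∈ S, π a = f a := by
  classical
  have hbij : Set.BijOn f S (f '' S) := hinj.bijOn_image
  let e1 : S ≃ (f '' S) := hbij.equiv f
  have hcard : Fintype.card (↥(Sᶜ)) = Fintype.card (↥((f '' S)ᶜ)) := by
    rw [Fintype.card_compl_set, Fintype.card_compl_set, Fintype.card_congr e1]
  let e2 : ↥(Sᶜ) ≃ ↥((f '' S)ᶜ) := Fintype.equivOfCardEq hcard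
  refine ⟨(Equiv.Set.sumCompl S).symm.trans ((e1.sumCongr e2).trans (Equiv.Set.sumCompl (f '' S))), ?_⟩
  intro a ha
  have h1 : (Equiv.Set.sumCompl S).symm a = Sum.inl ⟨a, ha⟩ :=
    Equiv.Set.sumCompl_symm_apply_of_mem ha
  simp only [Equiv.trans_apply, h1, Equiv.sumCongr_apply, Sum.map_inl]
  rfl

/-- condition that position `N-1-s` (letter index from the right) carries `(x, true)` -/
def Cond1 (L : List (α × Bool)) (x : α) (s : ℕ) : Prop :=
  s < L.length ∧ L[L.length - 1 - s]? = some (x, true)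

def Cond2 (L : List (α × Bool)) (x : α) (s : ℕ) : Prop :=
  0 < s ∧ L[L.length - s]? = some (x, false)

instance (L : List (α × Bool)) (x : α) (s : ℕ) : Decidable (Cond1 L x s) := by
  unfold Cond1; infer_instance

instance (L : List (α × Bool)) (x : α) (s : ℕ) : Decidable (Cond2 L x s) := by
  unfold Cond2; infer_instance

def gfun (L : List (α × Bool)) (x : α) (s : ℕ) : ℕ :=
  if Cond1 L x s then s + 1 else if Cond2 L x s then s - 1 else s

lemma gfun_le (L : List (α × Bool)) (x : α) (s : ℕ) (hs : s ≤ L.length) :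
    gfun L x s ≤ L.length := by
  unfold gfun
  split
  · next h => exact h.1
  · split <;> omega

lemma not_cond12 {L : List (α × Bool)} (hL : FreeGroup.reduce L = L) (x : α) (s : ℕ)
    (h1 : Cond1 L x s) (h2 : Cond2 L x s) : False := by
  obtain ⟨hs1, he1⟩ := h1
  obtain ⟨hs2, he2⟩ := h2
  have hv : L.length - s = (L.length - 1 - s) + 1 := by omega
  rw [hv] at he2
  exact no_adjacent hL he1 (by simpa using he2)

lemma gfun_of_cond1 {L : List (α × Bool)} {x : α} {s : ℕ} (h : Cond1 L x s) :
    gfun L x s = s + 1 := if_pos h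

lemma gfun_of_cond2 {L : List (α × Bool)} (hL : FreeGroup.reduce L = L) {x : α} {s : ℕ}
    (h : Cond2 L x s) : gfun L x s = s - 1 := by
  unfold gfun
  rw [if_neg (fun h1 => not_cond12 hL x s h1 h), if_pos h]

/-- Residual finiteness of free groups. -/
lemma freeGroup_residually_finite (w : FreeGroup α) (hw : w ≠ 1) :
    ∃ (Q : Type) (_ : Group Q) (_ : Finite Q), ∃ q : FreeGroup α →* Q, q w ≠ 1 := by
  classical
  set L : List (α × Bool) := w.toWord with hLdef
  set N : ℕ := L.length with hNdef
  have hred : FreeGroup.reduce L = L := FreeGroup.reduce_toWord w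
  have hN : 0 < N := by
    rcases Nat.eq_zero_or_pos N with h | h
    · exact absurd (FreeGroup.toWord_eq_nil_iff.mp (List.length_eq_zero_iff.mp h)) hw
    · exact h
  have hperm : ∀ x : α, ∃ π : Equiv.Perm (Fin (N+1)),
      ∀ a : Fin (N+1), (Cond1 L x a.val ∨ Cond2 L x a.val) →
        (π a).val = gfun L x a.val := by
    intro x
    have hinj : Set.InjOn (fun s : Fin (N+1) =>
        (⟨gfun L x s.val, by have := gfun_le L x s.val (Nat.lt_succ_iff.mp s.isLt); omega⟩ :
          Fin (N+1))) {s | Cond1 L x s.val ∨ Cond2 L x s.val} := by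
      intro t ht t' ht' heq
      have hg : gfun L x t.val = gfun L x t'.val := congrArg Fin.val heq
      have hgt : ∀ u : Fin (N+1), (Cond1 L x u.val ∨ Cond2 L x u.val) →
          (Cond1 L x u.val ∧ gfun L x u.val = u.val + 1) ∨
          (Cond2 L x u.val ∧ gfun L x u.val = u.val - 1 ∧ 0 < u.val) := by
        intro u hu
        by_cases h : Cond1 L x u.val
        · exact Or.inl ⟨h, gfun_of_cond1 h⟩
        · rcases hu with hu | hu
          · exact absurd hu h
          · exact Or.inr ⟨hu, gfun_of_cond2 hred hu, hu.1⟩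
      have key : ∀ u u' : Fin (N+1), (Cond1 L x u.val ∨ Cond2 L x u.val) →
          (Cond1 L x u'.val ∨ Cond2 L x u'.val) → gfun L x u.val = gfun L x u'.val →
          u.val ≤ u'.val → u = u' := by
        intro u u' hu hu' hg hle
        rcases hgt u hu with ⟨h1, e1⟩ | ⟨h1, e1, p1⟩ <;>
          rcases hgt u' hu' with ⟨h2, e2⟩ | ⟨h2, e2, p2⟩
        · exact Fin.ext (by omega)
        · exfalso
          -- u up-move, u' down-move: u' = u + 2, adjacent letters (x,false),(x,true)
          have hu'2 : u'.val = u.val + 2 := by omega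
          obtain ⟨hlt1, he1⟩ := h1
          obtain ⟨hpos2, he2⟩ := h2
          have hidx : N - u'.val < N := by
            have := (List.getElem?_eq_some_iff.mp he2).1; omega
          have hv : N - 1 - u.val = (N - u'.val) + 1 := by omega
          rw [hv] at he1
          exact no_adjacent hred he2 (by simpa using he1)
        · exfalso; omega
        · exact Fin.ext (by omega)
      rcases Nat.le_total t.val t'.val with h | h
      · exact key t t' ht ht' hg h
      · exact (key t' t ht' ht hg.symm h).symm
    obtain ⟨π, hπ⟩ := exists_perm_extend _ _ hinj
    exact ⟨π, fun a ha => by rw [hπ a ha]⟩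
  choose σ hσ using hperm
  -- stepping lemmas
  have step_true : ∀ (k : ℕ) (x : α), L[k]? = some (x, true) →
      ∀ u : Fin (N+1), u.val = N - 1 - k → (σ x u).val = N - k := by
    intro k x hk u hu
    have hkN : k < N := by have := (List.getElem?_eq_some_iff.mp hk).1; omega
    have hc1 : Cond1 L x u.val := by
      refine ⟨by omega, ?_⟩
      rw [hu, show N - 1 - (N - 1 - k) = k by omega]
      exact hk
    rw [hσ x u (Or.inl hc1), gfun_of_cond1 hc1]
    omega
  have step_false : ∀ (k : ℕ) (x : α), L[k]? = some (x, false) →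
      ∀ u : Fin (N+1), u.val = N - k → (σ x u).val = N - 1 - k := by
    intro k x hk u hu
    have hkN : k < N := by have := (List.getElem?_eq_some_iff.mp hk).1; omega
    have hc2 : Cond2 L x u.val := by
      refine ⟨by omega, ?_⟩
      rw [hu, show N - (N - k) = k by omega]
      exact hk
    rw [hσ x u (Or.inr hc2), gfun_of_cond2 hred hc2]
    omega
  -- evaluation
  set f : (α × Bool) → Equiv.Perm (Fin (N+1)) :=
    (fun c => cond c.2 (σ c.1) (σ c.1)⁻¹) with hfdef
  have main : ∀ n, n ≤ N → ∀ j, j + n = N →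
      (((L.drop j).map f).prod ⟨0, by omega⟩).val = n := by
    intro n
    induction n with
    | zero =>
        intro _ j hj
        rw [List.drop_of_length_le (by omega), List.map_nil, List.prod_nil]
        rfl
    | succ m ih =>
        intro hn j hj
        have hjN : j < N := by omega
        have hdrop : L.drop j = L[j] :: L.drop (j+1) := List.drop_eq_getElem_cons (by omega)
        rw [hdrop, List.map_cons, List.prod_cons, Equiv.Perm.mul_apply]
        have hrest := ih (by omega) (j+1) (by omega)
        set v : Fin (N+1) := ((L.drop (j+1)).map f).prod ⟨0, by omega⟩ with hvdef
        have hvval : v.val = m := hrest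
        have hget : L[j]? = some L[j] := List.getElem?_eq_getElem (by omega)
        rcases hLj : L[j] with ⟨x, b⟩
        rw [hLj] at hget
        have hm : m = N - 1 - j := by omega
        cases b
        · -- letter (x, false): f = (σ x)⁻¹ ; want ((σ x)⁻¹ v).val = m + 1 = N - j
          show (((σ x)⁻¹ : Equiv.Perm (Fin (N+1))) v).val = m + 1
          have hs : σ x ⟨N - j, by omega⟩ = v := by
            apply Fin.ext
            rw [step_false j x hget ⟨N - j, by omega⟩ rfl]
            omega
          rw [← hs, ← Equiv.Perm.mul_apply, inv_mul_cancel, Equiv.Perm.one_apply]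
          show N - j = m + 1
          omega
        · show ((σ x) v).val = m + 1
          rw [step_true j x hget v (by omega)]
          omega
  refine ⟨Equiv.Perm (Fin (N+1)), inferInstance, inferInstance, FreeGroup.lift σ, ?_⟩
  intro hq1
  have hw' : FreeGroup.lift σ w = ((w.toWord).map f).prod := by
    conv_lhs => rw [← FreeGroup.mk_toWord (x := w)]
    rw [FreeGroup.lift_mk]
  have hmain := main N le_rfl 0 (by omega)
  rw [List.drop_zero] at hmain
  rw [hq1] at hw'
  rw [← hw'] at hmain
  simp [Equiv.Perm.one_apply] at hmain
  omega

end RF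


/-- f.g. free groups are Hopfian -/
lemma freeGroup_hopfian {m : ℕ} (ψ : FreeGroup (Fin m) →* FreeGroup (Fin m))
    (hs : Function.Surjective ψ) {w : FreeGroup (Fin m)} (hw : ψ w = 1) : w = 1 := by
  by_contra hne
  obtain ⟨Q, _, _, q, hq⟩ := freeGroup_residually_finite w hne
  haveI : Finite (FreeGroup (Fin m) →* Q) := Finite.of_equiv _ FreeGroup.lift
  have hinj : Function.Injective (fun φ : FreeGroup (Fin m) →* Q => φ.comp ψ) := by
    intro φ1 φ2 h
    apply MonoidHom.ext; intro y
    obtain ⟨x, rfl⟩ := hs y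
    exact DFunLike.congr_fun h x
  obtain ⟨φ, hφ⟩ := (Finite.injective_iff_surjective.mp hinj) q
  have : q w = 1 := by
    rw [← hφ]
    show φ (ψ w) = 1
    rw [hw, _root_.map_one]
  exact hq this


open Function Multiplicative

noncomputable section

/-- the hom `FreeGroup (Fin n) →* Multiplicative ℚ` with prescribed values on generators -/
def mton {n : ℕ} (v : Fin n → ℚ) : FreeGroup (Fin n) →* Multiplicative ℚ :=
  FreeGroup.lift (fun i => Multiplicative.ofAdd (v i))

lemma mton_of {n : ℕ} (v : Fin n → ℚ) (i : Fin n) : mton v (FreeGroup.of i) = ofAdd (v i) :=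
  FreeGroup.lift_apply_of

lemma mton_add {n : ℕ} (v w : Fin n → ℚ) (x : FreeGroup (Fin n)) :
    mton (v + w) x = mton v x * mton w x := by
  have : mton (v + w) = mton v * mton w := by
    apply FreeGroup.ext_hom
    intro i
    simp [mton, MonoidHom.mul_apply, ofAdd_add, Pi.add_apply]
  rw [this, MonoidHom.mul_apply]

/-- recover a hom from its values on generators -/
lemma mton_eq_of_hom {n : ℕ} (h : FreeGroup (Fin n) →* Multiplicative ℚ) :
    mton (fun i => toAdd (h (FreeGroup.of i))) = h := by
  apply FreeGroup.ext_hom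
  intro i
  simp [mton]

lemma mton_zero {n : ℕ} (x : FreeGroup (Fin n)) : mton (0 : Fin n → ℚ) x = 1 := by
  have h : mton (0 : Fin n → ℚ) = 1 := by
    apply FreeGroup.ext_hom
    intro i
    simp [mton]
  rw [h]
  rfl

/-- Shenitzer's theorem: if a free group `F` of finite rank `r ≥ 1` is an
amalgamated free product `A *_⟨c⟩ B` over an infinite cyclic subgroup `⟨c⟩`
(expressed via the universal property of the pushout), with `A`, `B` finitely
generated free of ranks `a`, `b`, `c ≠ 1`, `A ≠ ⟨c⟩ ≠ B`, then
`rank F = rank A + rank B - 1`. -/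
theorem shenitzer {F : Type*} [Group F] (r a b : ℕ) (hr : 1 ≤ r)
    (hF : Nonempty (F ≃* FreeGroup (Fin r)))
    (A B : Subgroup F) (c : F) (hcA : c ∈ A) (hcB : c ∈ B) (hc : c ≠ 1)
    (hA : A ≠ Subgroup.zpowers c) (hB : B ≠ Subgroup.zpowers c)
    (hAfg : A.FG) (hBfg : B.FG)
    (hAfree : Nonempty (↥A ≃* FreeGroup (Fin a)))
    (hBfree : Nonempty (↥B ≃* FreeGroup (Fin b)))
    (hpush : ∀ (K : Type) [Group K] (f : ↥A →* K) (g : ↥B →* K),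
      f ⟨c, hcA⟩ = g ⟨c, hcB⟩ →
      ∃! h : F →* K, h.comp A.subtype = f ∧ h.comp B.subtype = g) :
    r + 1 = a + b := by
  classical
  obtain ⟨e⟩ := hF
  obtain ⟨φA⟩ := hAfree
  obtain ⟨φB⟩ := hBfree
  -- Part I : linear algebra of homs into ℚ gives r + d = a + b with d = finrank of range ≤ 1
  -- the additive map Φ
  let Φfun : (Fin r → ℚ) → (Fin a → ℚ) × (Fin b → ℚ) := fun v =>
    (fun i => toAdd (mton v (e ((φA.symm (FreeGroup.of i) : A) : F))),
     fun j => toAdd (mton v (e ((φB.symm (FreeGroup.of j) : B) : F))))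
  have Φadd : ∀ v w, Φfun (v + w) = Φfun v + Φfun w := by
    intro v w
    unfold Φfun
    refine Prod.ext ?_ ?_ <;> funext i <;>
      simp [mton_add, toAdd_mul]
  let Φ : (Fin r → ℚ) →+ ((Fin a → ℚ) × (Fin b → ℚ)) :=
    { toFun := Φfun, map_zero' := by
        unfold Φfun
        refine Prod.ext ?_ ?_ <;> funext i <;> simp [mton_zero]
      map_add' := Φadd }
  -- the constraint functional
  let sfun : ((Fin a → ℚ) × (Fin b → ℚ)) → ℚ := fun p =>
    toAdd (mton p.1 (φA ⟨c, hcA⟩)) - toAdd (mton p.2 (φB ⟨c, hcB⟩))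
  have sadd : ∀ p q, sfun (p + q) = sfun p + sfun q := by
    intro p q
    unfold sfun
    simp [mton_add, toAdd_mul]
    ring
  let sAdd : ((Fin a → ℚ) × (Fin b → ℚ)) →+ ℚ :=
    { toFun := sfun, map_zero' := by unfold sfun; simp [mton_zero]
      map_add' := sadd }
  let sL : ((Fin a → ℚ) × (Fin b → ℚ)) →ₗ[ℚ] ℚ := sAdd.toRatLinearMap
  let ΦL : (Fin r → ℚ) →ₗ[ℚ] ((Fin a → ℚ) × (Fin b → ℚ)) := Φ.toRatLinearMap
  -- key computation : mton (Φfun v).1 is the composite hom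
  have hcomp1 : ∀ v : Fin r → ℚ, mton (Φfun v).1 =
      ((mton v).comp e.toMonoidHom).comp (A.subtype.comp φA.symm.toMonoidHom) := by
    intro v
    have := mton_eq_of_hom (((mton v).comp e.toMonoidHom).comp (A.subtype.comp φA.symm.toMonoidHom))
    rw [← this]
    rfl
  have hcomp2 : ∀ v : Fin r → ℚ, mton (Φfun v).2 =
      ((mton v).comp e.toMonoidHom).comp (B.subtype.comp φB.symm.toMonoidHom) := by
    intro v
    have := mton_eq_of_hom (((mton v).comp e.toMonoidHom).comp (B.subtype.comp φB.symm.toMonoidHom))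
    rw [← this]
    rfl
  -- membership in kernel
  have hmem : ∀ v, ΦL v ∈ LinearMap.ker sL := by
    intro v
    show sfun (Φfun v) = 0
    unfold sfun
    rw [hcomp1 v, hcomp2 v]
    simp only [MonoidHom.comp_apply, MonoidHom.coe_coe, Subgroup.coe_subtype,
      MulEquiv.symm_apply_apply]
    simp
  -- injectivity
  have hinj : Function.Injective Φfun := by
    intro v v' hvv
    have h1 : (((mton v).comp e.toMonoidHom).comp A.subtype) =
        (((mton v').comp e.toMonoidHom).comp A.subtype) := by
      have := congrArg (fun p => mton p.1) hvv
      rw [hcomp1 v, hcomp1 v'] at this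
      simp only [← MonoidHom.comp_assoc] at this
      exact (MonoidHom.cancel_right (MulEquiv.surjective φA.symm)).mp this
    have h2 : (((mton v).comp e.toMonoidHom).comp B.subtype) =
        (((mton v').comp e.toMonoidHom).comp B.subtype) := by
      have := congrArg (fun p => mton p.2) hvv
      rw [hcomp2 v, hcomp2 v'] at this
      simp only [← MonoidHom.comp_assoc] at this
      exact (MonoidHom.cancel_right (MulEquiv.surjective φB.symm)).mp this
    obtain ⟨h, hh, huniq⟩ := hpush (Multiplicative ℚ)
      (((mton v).comp e.toMonoidHom).comp A.subtype)
      (((mton v).comp e.toMonoidHom).comp B.subtype) rfl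
    have e1 : (mton v).comp e.toMonoidHom = (mton v').comp e.toMonoidHom := by
      have u1 := huniq ((mton v).comp e.toMonoidHom) ⟨rfl, rfl⟩
      have u2 := huniq ((mton v').comp e.toMonoidHom) ⟨h1.symm, h2.symm⟩
      rw [u1, u2]
    have e2 : mton v = mton v' :=
      (MonoidHom.cancel_right (MulEquiv.surjective e)).mp e1
    funext i
    have := congrArg (fun h => toAdd (h (FreeGroup.of i))) e2
    simpa [mton_of] using this
  -- surjectivity onto the kernel
  have hsurj : ∀ p ∈ LinearMap.ker sL, ∃ v, Φfun v = p := by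
    rintro ⟨u, u'⟩ hp
    have hpc : mton u (φA ⟨c, hcA⟩) = mton u' (φB ⟨c, hcB⟩) := by
      have : sfun (u, u') = 0 := hp
      unfold sfun at this
      have h2 := sub_eq_zero.mp this
      exact toAdd.injective h2
    obtain ⟨h, ⟨hha, hhb⟩, _⟩ := hpush (Multiplicative ℚ)
      ((mton u).comp φA.toMonoidHom) ((mton u').comp φB.toMonoidHom) hpc
    refine ⟨fun i => toAdd (h (e.symm (FreeGroup.of i))), ?_⟩
    have hme : mton (fun i => toAdd (h (e.symm (FreeGroup.of i)))) =
        h.comp e.symm.toMonoidHom := by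
      rw [← mton_eq_of_hom (h.comp e.symm.toMonoidHom)]
      rfl
    have hval : ∀ z : F, mton (fun i => toAdd (h (e.symm (FreeGroup.of i)))) (e z) = h z := by
      intro z
      rw [hme]
      simp
    refine Prod.ext ?_ ?_
    · funext i
      show toAdd (mton _ (e ((φA.symm (FreeGroup.of i) : A) : F))) = u i
      rw [hval]
      have : h ((φA.symm (FreeGroup.of i) : A) : F) =
          ((mton u).comp φA.toMonoidHom) (φA.symm (FreeGroup.of i)) := by
        rw [← hha]; rfl
      rw [this]
      simp [mton_of]
    · funext j
      show toAdd (mton _ (e ((φB.symm (FreeGroup.of j) : B) : F))) = u' j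
      rw [hval]
      have : h ((φB.symm (FreeGroup.of j) : B) : F) =
          ((mton u').comp φB.toMonoidHom) (φB.symm (FreeGroup.of j)) := by
        rw [← hhb]; rfl
      rw [this]
      simp [mton_of]
  -- conclude r + d = a + b
  let ΦK := ΦL.codRestrict (LinearMap.ker sL) hmem
  have hbij : Function.Bijective ΦK := by
    constructor
    · intro v v' hv
      apply hinj
      exact congrArg Subtype.val hv
    · rintro ⟨p, hp⟩
      obtain ⟨v, hv⟩ := hsurj p hp
      exact ⟨v, Subtype.ext hv⟩
  have hfr : r = Module.finrank ℚ (LinearMap.ker sL) := by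
    have := LinearEquiv.finrank_eq (LinearEquiv.ofBijective ΦK hbij)
    rw [Module.finrank_fin_fun ℚ] at this
    exact this
  have hrn : Module.finrank ℚ (LinearMap.range sL) + Module.finrank ℚ (LinearMap.ker sL)
      = a + b := by
    rw [LinearMap.finrank_range_add_finrank_ker sL]
    rw [Module.finrank_prod, Module.finrank_fin_fun, Module.finrank_fin_fun]
  have hd1 : Module.finrank ℚ (LinearMap.range sL) ≤ 1 := by
    have := Submodule.finrank_le (LinearMap.range sL)
    rwa [Module.finrank_self] at this
  -- case on d
  rcases Nat.lt_or_ge (Module.finrank ℚ (LinearMap.range sL)) 1 with hd | hd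
  · -- d = 0 : r = a + b, contradiction via Hopf
    exfalso
    have hrab : r = a + b := by omega
    -- generators of A and B and the induced surjection from a free group
    let gA : Fin a → F := fun i => ((φA.symm (FreeGroup.of i) : A) : F)
    let gB : Fin b → F := fun j => ((φB.symm (FreeGroup.of j) : B) : F)
    let π : FreeGroup (Fin a ⊕ Fin b) →* F := FreeGroup.lift (Sum.elim gA gB)
    have hπA : π.comp (FreeGroup.map Sum.inl) = A.subtype.comp φA.symm.toMonoidHom := by
      apply FreeGroup.ext_hom
      intro i
      simp [π, FreeGroup.map.of, gA]
    have hπB : π.comp (FreeGroup.map Sum.inr) = B.subtype.comp φB.symm.toMonoidHom := by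
      apply FreeGroup.ext_hom
      intro j
      simp [π, FreeGroup.map.of, gB]
    have hAle : A ≤ π.range := by
      intro x hx
      refine ⟨FreeGroup.map Sum.inl (φA ⟨x, hx⟩), ?_⟩
      have hcalc := DFunLike.congr_fun hπA (φA ⟨x, hx⟩)
      simp only [MonoidHom.comp_apply, MonoidHom.coe_coe, Subgroup.coe_subtype,
        MulEquiv.symm_apply_apply] at hcalc
      simpa using hcalc
    have hBle : B ≤ π.range := by
      intro x hx
      refine ⟨FreeGroup.map Sum.inr (φB ⟨x, hx⟩), ?_⟩
      have hcalc := DFunLike.congr_fun hπB (φB ⟨x, hx⟩)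
      simp only [MonoidHom.comp_apply, MonoidHom.coe_coe, Subgroup.coe_subtype,
        MulEquiv.symm_apply_apply] at hcalc
      simpa using hcalc
    -- A and B generate F (from the uniqueness part of the pushout property)
    have hsup : A ⊔ B = ⊤ := by
      set J : Subgroup (FreeGroup (Fin r)) := (A ⊔ B).map e.toMonoidHom with hJdef
      have hmemA : ∀ x : A, e.toMonoidHom ((A.subtype : A →* F) x) ∈ J :=
        fun x => ⟨(x : F), le_sup_left (a := A) (b := B) x.2, rfl⟩
      have hmemB : ∀ x : B, e.toMonoidHom ((B.subtype : B →* F) x) ∈ J :=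
        fun x => ⟨(x : F), le_sup_right (a := A) (b := B) x.2, rfl⟩
      let f : A →* J := (e.toMonoidHom.comp A.subtype).codRestrict J hmemA
      let g : B →* J := (e.toMonoidHom.comp B.subtype).codRestrict J hmemB
      obtain ⟨h, ⟨hhA, hhB⟩, _⟩ := hpush J f g (Subtype.ext rfl)
      obtain ⟨h0, hh0, huniq0⟩ := hpush (FreeGroup (Fin r))
        (e.toMonoidHom.comp A.subtype) (e.toMonoidHom.comp B.subtype) rfl
      have u1 : J.subtype.comp h = h0 := by
        apply huniq0
        constructor
        · rw [MonoidHom.comp_assoc, hhA]; rfl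
        · rw [MonoidHom.comp_assoc, hhB]; rfl
      have u2 : e.toMonoidHom = h0 := huniq0 e.toMonoidHom ⟨rfl, rfl⟩
      have hJs : J.subtype.comp h = e.toMonoidHom := u1.trans u2.symm
      rw [Subgroup.eq_top_iff']
      intro x
      have hx : e x ∈ J := by
        have : (J.subtype.comp h) x = e x := by rw [hJs]; rfl
        rw [← this]
        exact (h x).2
      obtain ⟨y, hy, hyx⟩ := hx
      rwa [e.injective hyx] at hy
    have hπsurj : Function.Surjective π := by
      rw [← MonoidHom.range_eq_top]
      rw [eq_top_iff, ← hsup]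
      exact sup_le hAle hBle
    -- a nontrivial kernel element
    set uA : FreeGroup (Fin a) := φA ⟨c, hcA⟩ with huAdef
    set uB : FreeGroup (Fin b) := φB ⟨c, hcB⟩ with huBdef
    set wA : FreeGroup (Fin a ⊕ Fin b) := FreeGroup.map Sum.inl uA with hwAdef
    set wB : FreeGroup (Fin a ⊕ Fin b) := FreeGroup.map Sum.inr uB with hwBdef
    have hπwA : π wA = c := by
      have := DFunLike.congr_fun hπA uA
      simp only [MonoidHom.comp_apply, MonoidHom.coe_coe, Subgroup.coe_subtype,
        huAdef, MulEquiv.symm_apply_apply] at this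
      simpa using this
    have hπwB : π wB = c := by
      have := DFunLike.congr_fun hπB uB
      simp only [MonoidHom.comp_apply, MonoidHom.coe_coe, Subgroup.coe_subtype,
        huBdef, MulEquiv.symm_apply_apply] at this
      simpa using this
    have hk1 : π (wA * wB⁻¹) = 1 := by
      rw [map_mul, map_inv, hπwA, hπwB]
      group
    have hkne : wA * wB⁻¹ ≠ 1 := by
      intro hkk
      have hw : wA = wB := by
        rwa [mul_inv_eq_one] at hkk
      let κ : FreeGroup (Fin a ⊕ Fin b) →* FreeGroup (Fin a) :=
        FreeGroup.lift (Sum.elim FreeGroup.of (fun _ => 1))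
      have hκA : κ wA = uA := by
        have hcompκ : κ.comp (FreeGroup.map Sum.inl) = MonoidHom.id _ := by
          apply FreeGroup.ext_hom
          intro i
          simp [κ, FreeGroup.map.of]
        have := DFunLike.congr_fun hcompκ uA
        simpa using this
      have hκB : κ wB = 1 := by
        have hcompκ : κ.comp (FreeGroup.map Sum.inr) = 1 := by
          apply FreeGroup.ext_hom
          intro j
          simp [κ, FreeGroup.map.of]
        have := DFunLike.congr_fun hcompκ uB
        simpa using this
      have huA1 : uA = 1 := by rw [← hκA, hw, hκB]
      have : (⟨c, hcA⟩ : A) = 1 := φA.injective (by rw [← huAdef, huA1, map_one])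
      exact hc (congrArg Subtype.val this)
    -- transport to an endomorphism of `FreeGroup (Fin r)` and apply Hopficity
    let ev : Fin r ≃ (Fin a ⊕ Fin b) := (finCongr hrab).trans finSumFinEquiv.symm
    let χ : FreeGroup (Fin r) ≃* FreeGroup (Fin a ⊕ Fin b) := FreeGroup.freeGroupCongr ev
    let ψ : FreeGroup (Fin r) →* FreeGroup (Fin r) := (e.toMonoidHom.comp π).comp χ.toMonoidHom
    have hψs : Function.Surjective ψ :=
      ((e.surjective.comp hπsurj).comp χ.surjective)
    have hkz : χ.symm (wA * wB⁻¹) = 1 := by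
      apply freeGroup_hopfian ψ hψs
      show e (π (χ (χ.symm (wA * wB⁻¹)))) = 1
      rw [MulEquiv.apply_symm_apply, hk1, map_one]
    apply hkne
    have := congrArg χ hkz
    simpa using this
  · omega

end
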